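/- (Generation of the stabilizer of ∞ in the Eisenstein–Picard modular group.) Let G ∈ U(3,1) be a 4×4 matrix all of whose entries lie in Z[ω], with G₄₁ = 0 and G₁₁ = 1. Then G lies in the subgroup of GL(4,ℂ) generated by the three matrices N₁, M_{U₁}, M_{U₂}. -/

import Mathlib

open Matrix Complex

/-- ω = (−1 + i√3)/2, a primitive cube root of unity. -/
noncomputable def ω : ℂ := (-1 + Complex.I * Real.sqrt 3) / 2

/-- The Eisenstein integers Z[ω], as a subset of ℂ. -/
def Zω : Set ℂ := {z : ℂ | ∃ a b : ℤ, z = (a : ℂ) + (b : ℂ) * ω}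

/-- The Hermitian form matrix J. -/
def Jm : Matrix (Fin 4) (Fin 4) ℂ := !![0,0,0,1; 0,1,0,0; 0,0,1,0; 1,0,0,0]

/-- Heisenberg translation N_(τ,t). -/
noncomputable def N (τ₁ τ₂ : ℂ) (t : ℝ) : Matrix (Fin 4) (Fin 4) ℂ :=
  !![1, -(starRingEnd ℂ) τ₁, -(starRingEnd ℂ) τ₂,
       (-((Complex.normSq τ₁ : ℂ) + (Complex.normSq τ₂ : ℂ)) + Complex.I * (t : ℝ)) / 2;
     0, 1, 0, τ₁;
     0, 0, 1, τ₂;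
     0, 0, 0, 1]

/-- Heisenberg rotation M_U = diag(1, U, 1). -/
def M (U : Matrix (Fin 2) (Fin 2) ℂ) : Matrix (Fin 4) (Fin 4) ℂ :=
  !![1, 0, 0, 0;
     0, U 0 0, U 0 1, 0;
     0, U 1 0, U 1 1, 0;
     0, 0, 0, 1]

/-- Heisenberg dilation A_r = diag(r, 1, 1, 1/r). -/
noncomputable def Ad (r : ℝ) : Matrix (Fin 4) (Fin 4) ℂ :=
  !![(r : ℂ), 0, 0, 0; 0, 1, 0, 0; 0, 0, 1, 0; 0, 0, 0, (r : ℂ)⁻¹]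

noncomputable def U₁ : Matrix (Fin 2) (Fin 2) ℂ := !![0, 1; 1, 0]
noncomputable def U₂ : Matrix (Fin 2) (Fin 2) ℂ := !![-ω, 0; 0, 1]

/-- The Heisenberg translation N₁ = N_((1,0)ᵀ, √3). -/
noncomputable def N₁ : Matrix (Fin 4) (Fin 4) ℂ := N 1 0 (Real.sqrt 3)

/-- The involution R. -/
def Rmat : Matrix (Fin 4) (Fin 4) ℂ := !![0,0,0,1; 0,-1,0,0; 0,0,-1,0; 1,0,0,0]

/-- The generators {N₁, M_{U₁}, M_{U₂}} of the stabilizer of ∞, as a subset of GL(4,ℂ). -/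
noncomputable def gens3 : Set (GL (Fin 4) ℂ) :=
  {g | (g : Matrix (Fin 4) (Fin 4) ℂ) = N₁ ∨ (g : Matrix (Fin 4) (Fin 4) ℂ) = M U₁ ∨
       (g : Matrix (Fin 4) (Fin 4) ℂ) = M U₂}

/-- The generators {U₁, U₂}, as a subset of GL(2,ℂ). -/
noncomputable def gens2 : Set (GL (Fin 2) ℂ) :=
  {g | (g : Matrix (Fin 2) (Fin 2) ℂ) = U₁ ∨ (g : Matrix (Fin 2) (Fin 2) ℂ) = U₂}

/-- The generators {N₁, M_{U₁}, M_{U₂}, R}, as a subset of GL(4,ℂ). -/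
noncomputable def gens4 : Set (GL (Fin 4) ℂ) :=
  {g | (g : Matrix (Fin 4) (Fin 4) ℂ) = N₁ ∨ (g : Matrix (Fin 4) (Fin 4) ℂ) = M U₁ ∨
       (g : Matrix (Fin 4) (Fin 4) ℂ) = M U₂ ∨ (g : Matrix (Fin 4) (Fin 4) ℂ) = Rmat}

/-! ### Auxiliary development -/

section Aux

lemma sqrt3_sq : (Real.sqrt 3 : ℝ) * Real.sqrt 3 = 3 :=
  Real.mul_self_sqrt (by norm_num)

lemma sqrt3_sqC : ((Real.sqrt 3 : ℝ) : ℂ) * ((Real.sqrt 3 : ℝ) : ℂ) = 3 := by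
  norm_cast; exact sqrt3_sq

lemma homega : ω * ω + ω + 1 = 0 := by
  unfold ω
  have h := sqrt3_sqC
  have hI := Complex.I_mul_I
  linear_combination (Complex.I*Complex.I/4)*h + (3/4:ℂ)*hI

lemma conj_omega : (starRingEnd ℂ) ω = -1 - ω := by
  unfold ω
  rw [map_div₀, _root_.map_add, _root_.map_mul, Complex.conj_I, Complex.conj_ofReal]
  simp [map_ofNat]
  ring

lemma re_omega : ω.re = -(1/2) := by simp [ω]; norm_num

lemma im_omega : ω.im = Real.sqrt 3 / 2 := by simp [ω]

lemma normSq_eis (m n : ℤ) :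
    (Complex.normSq ((m:ℂ) + (n:ℂ)*ω) : ℝ) = ((m*m - m*n + n*n : ℤ) : ℝ) := by
  simp only [Complex.normSq_apply, Complex.add_re, Complex.add_im, Complex.mul_re,
    Complex.mul_im, Complex.intCast_re, Complex.intCast_im, re_omega, im_omega]
  push_cast
  nlinarith [sqrt3_sq]

/-- N is multiplicative. -/
lemma Nmul (τ₁ τ₂ σ₁ σ₂ : ℂ) (t s : ℝ) :
    N τ₁ τ₂ t * N σ₁ σ₂ s
      = N (τ₁+σ₁) (τ₂+σ₂) (t + s - 2*((starRingEnd ℂ) τ₁*σ₁ + (starRingEnd ℂ) τ₂*σ₂).im) := by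
  ext i j
  fin_cases i <;> fin_cases j <;>
    simp [N, Matrix.mul_apply, Fin.sum_univ_four, Matrix.vecHead, Matrix.vecTail,
      -mul_eq_zero, -neg_eq_zero] <;>
  · apply Complex.ext <;>
      simp [Complex.normSq_apply, Complex.add_re, Complex.add_im, Complex.mul_re,
        Complex.mul_im, Complex.conj_re, Complex.conj_im] <;>
      ring

lemma N_zero : N 0 0 0 = 1 := by
  ext i j
  fin_cases i <;> fin_cases j <;>
    simp [N, Matrix.one_apply, Matrix.vecHead, Matrix.vecTail]

lemma N_congr {a b a' b' : ℂ} {t t' : ℝ} (ha : a = a') (hb : b = b') (ht : t = t') :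
    N a b t = N a' b' t' := by rw [ha, hb, ht]

lemma N_mul_N_neg (τ₁ τ₂ : ℂ) (t : ℝ) : N τ₁ τ₂ t * N (-τ₁) (-τ₂) (-t) = 1 := by
  rw [Nmul]
  have h : ((starRingEnd ℂ) τ₁ * -τ₁ + (starRingEnd ℂ) τ₂ * -τ₂).im = 0 := by
    simp [mul_neg, mul_comm ((starRingEnd ℂ) τ₁) τ₁, mul_comm ((starRingEnd ℂ) τ₂) τ₂,
      Complex.mul_conj]
  exact (N_congr (by ring) (by ring) (by rw [h]; ring)).trans N_zero

lemma Mmul (U V : Matrix (Fin 2) (Fin 2) ℂ) : M U * M V = M (U * V) := by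
  ext i j
  fin_cases i <;> fin_cases j <;>
    simp [M, Matrix.mul_apply, Fin.sum_univ_four, Fin.sum_univ_two, Matrix.vecHead,
      Matrix.vecTail, -mul_eq_zero, -neg_eq_zero] <;> ring

lemma M_one : M (1 : Matrix (Fin 2) (Fin 2) ℂ) = 1 := by
  ext i j
  fin_cases i <;> fin_cases j <;>
    simp [M, Matrix.one_apply, Matrix.vecHead, Matrix.vecTail]

/-- diag 2x2 matrix -/
noncomputable def Dg (a b : ℂ) : Matrix (Fin 2) (Fin 2) ℂ := !![a, 0; 0, b]

lemma Dg_mul (a b c d : ℂ) : Dg a b * Dg c d = Dg (a*c) (b*d) := by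
  ext i j
  fin_cases i <;> fin_cases j <;>
    simp [Dg, Matrix.mul_apply, Fin.sum_univ_two, Matrix.vecHead, Matrix.vecTail,
      -mul_eq_zero, -neg_eq_zero]

lemma Dg_one : Dg 1 1 = (1 : Matrix (Fin 2) (Fin 2) ℂ) := by
  ext i j
  fin_cases i <;> fin_cases j <;>
    simp [Dg, Matrix.one_apply, Matrix.vecHead, Matrix.vecTail]

lemma U2_eq : U₂ = Dg (-ω) 1 := rfl

lemma U1_mul_U1 : U₁ * U₁ = 1 := by
  ext i j
  fin_cases i <;> fin_cases j <;>
    simp [U₁, Matrix.mul_apply, Fin.sum_univ_two, Matrix.one_apply, Matrix.vecHead,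
      Matrix.vecTail]

lemma U1_Dg_U1 (a b : ℂ) : U₁ * Dg a b * U₁ = Dg b a := by
  ext i j
  fin_cases i <;> fin_cases j <;>
    simp [U₁, Dg, Matrix.mul_apply, Fin.sum_univ_two, Matrix.vecHead, Matrix.vecTail,
      -mul_eq_zero, -neg_eq_zero]

lemma U1_Dg (a b : ℂ) : U₁ * Dg a b = !![0, b; a, 0] := by
  ext i j
  fin_cases i <;> fin_cases j <;>
    simp [U₁, Dg, Matrix.mul_apply, Fin.sum_univ_two, Matrix.vecHead, Matrix.vecTail,
      -mul_eq_zero, -neg_eq_zero]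

/-- The property we track: being the matrix of some element of the closure. -/
def P (X : Matrix (Fin 4) (Fin 4) ℂ) : Prop :=
  ∃ g ∈ Subgroup.closure gens3, (g : Matrix (Fin 4) (Fin 4) ℂ) = X

lemma P.mul {X Y : Matrix (Fin 4) (Fin 4) ℂ} (hX : P X) (hY : P Y) : P (X * Y) := by
  obtain ⟨g, hg, rfl⟩ := hX
  obtain ⟨h, hh, rfl⟩ := hY
  exact ⟨g * h, mul_mem hg hh, rfl⟩

lemma P_one : P 1 := ⟨1, one_mem _, rfl⟩

lemma P.congr {X Y : Matrix (Fin 4) (Fin 4) ℂ} (hX : P X) (e : X = Y) : P Y := e ▸ hX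

lemma P.inv_of {X Y : Matrix (Fin 4) (Fin 4) ℂ} (hX : P X) (h : X * Y = 1) : P Y := by
  obtain ⟨g, hg, rfl⟩ := hX
  exact ⟨g⁻¹, inv_mem hg, by rw [Matrix.coe_units_inv, Matrix.inv_eq_right_inv h]⟩

lemma P_N1 : P (N 1 0 (Real.sqrt 3)) := by
  refine ⟨⟨N 1 0 (Real.sqrt 3), N (-1) (-0) (-(Real.sqrt 3)), N_mul_N_neg 1 0 _, ?_⟩,
    Subgroup.subset_closure (Or.inl rfl), rfl⟩
  have h := N_mul_N_neg (-1) (-0) (-(Real.sqrt 3))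
  simpa using h

lemma P_MU1 : P (M U₁) :=
  ⟨⟨M U₁, M U₁, by rw [Mmul, U1_mul_U1, M_one], by rw [Mmul, U1_mul_U1, M_one]⟩,
    Subgroup.subset_closure (Or.inr (Or.inl rfl)), rfl⟩

lemma neg_omega_mul_inv : (-ω) * (1 + ω) = 1 := by linear_combination (-1:ℂ) * homega

lemma omega_mul_inv : ω * (-1 - ω) = 1 := by linear_combination (-1:ℂ) * homega

lemma P_MU2 : P (M U₂) := by
  refine ⟨⟨M U₂, M (Dg (1+ω) 1), ?_, ?_⟩,
    Subgroup.subset_closure (Or.inr (Or.inr rfl)), rfl⟩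
  · rw [U2_eq, Mmul, Dg_mul,
      show (-ω) * (1+ω) = 1 from neg_omega_mul_inv, mul_one, Dg_one, M_one]
  · rw [U2_eq, Mmul, Dg_mul,
      show (1+ω) * (-ω) = 1 by linear_combination (-1:ℂ) * homega, mul_one, Dg_one, M_one]

lemma P_Mdg_pow : ∀ k : ℕ, P (M (Dg ((-ω)^k) 1))
  | 0 => by rw [pow_zero, Dg_one, M_one]; exact P_one
  | (k+1) => by
      have h := (P_Mdg_pow k).mul P_MU2
      rw [U2_eq, Mmul, Dg_mul, mul_one] at h
      rwa [pow_succ]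

lemma P_M_omega : P (M (Dg ω 1)) := by
  have h := P_Mdg_pow 4
  rwa [show ((-ω)^4 : ℂ) = ω by linear_combination (ω*ω - ω) * homega] at h

lemma P_M_conj_omega : P (M (Dg (-1-ω) 1)) := by
  have h := P_Mdg_pow 2
  rwa [show ((-ω)^2 : ℂ) = -1-ω by linear_combination homega] at h

lemma normSq_omega : Complex.normSq ω = 1 := by
  have h : ω * (starRingEnd ℂ) ω = 1 := by
    rw [conj_omega]; exact omega_mul_inv
  rw [Complex.mul_conj] at h
  exact_mod_cast h

/-- Conjugating a translation by the rotation diag(ω,1). -/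
lemma conj_N_omega (τ₁ τ₂ : ℂ) (t : ℝ) :
    M (Dg ω 1) * N τ₁ τ₂ t * M (Dg (-1-ω) 1) = N (ω*τ₁) τ₂ t := by
  have hns : (Complex.normSq (ω*τ₁) : ℝ) = Complex.normSq τ₁ := by
    rw [Complex.normSq_mul, normSq_omega, one_mul]
  have hco : (starRingEnd ℂ) (ω*τ₁) = (-1-ω) * (starRingEnd ℂ) τ₁ := by
    rw [_root_.map_mul, conj_omega]
  ext i j
  fin_cases i <;> fin_cases j <;>
    simp [N, M, Dg, Matrix.mul_apply, Fin.sum_univ_four, hns, hco, Matrix.vecHead,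
      Matrix.vecTail, -mul_eq_zero, -neg_eq_zero] <;>
    first
      | ring1
      | linear_combination homega
      | linear_combination (-1 : ℂ) * homega
      | linear_combination τ₁ * homega
      | linear_combination (-τ₁) * homega

/-- Conjugating a translation by the coordinate swap. -/
lemma conj_N_swap (τ₁ τ₂ : ℂ) (t : ℝ) :
    M U₁ * N τ₁ τ₂ t * M U₁ = N τ₂ τ₁ t := by
  ext i j
  fin_cases i <;> fin_cases j <;>
    simp [N, M, U₁, Matrix.mul_apply, Fin.sum_univ_four, Matrix.vecHead,
      Matrix.vecTail, -mul_eq_zero, -neg_eq_zero] <;>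
    ring

lemma P_N_omega : P (N ω 0 (Real.sqrt 3)) := by
  have h := (P_M_omega.mul P_N1).mul P_M_conj_omega
  rw [conj_N_omega, mul_one] at h
  exact h

lemma P_N1_inv : P (N (-1) 0 (-(Real.sqrt 3))) := by
  have h := P_N1.inv_of (N_mul_N_neg 1 0 (Real.sqrt 3))
  simpa using h

lemma P_N_omega_inv : P (N (-ω) 0 (-(Real.sqrt 3))) := by
  have h := P_N_omega.inv_of (N_mul_N_neg ω 0 (Real.sqrt 3))
  simpa using h

lemma P_N_zero_params : P (N 0 0 0) := by rw [N_zero]; exact P_one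

lemma P_N_int : ∀ m : ℤ, P (N (m:ℂ) 0 ((m:ℝ) * Real.sqrt 3)) := by
  intro m
  induction m using Int.induction_on with
  | zero =>
      exact P_N_zero_params.congr (N_congr (by norm_num) rfl (by norm_num)).symm
  | succ k ih =>
      have h := ih.mul P_N1
      rw [Nmul] at h
      exact h.congr (N_congr (by push_cast; ring) (by ring) (by simp; push_cast; ring))
  | pred k ih =>
      have h := ih.mul P_N1_inv
      rw [Nmul] at h
      exact h.congr (N_congr (by push_cast; ring) (by ring) (by simp; push_cast; ring))

lemma conj_omega_mul (z : ℂ) : (starRingEnd ℂ) (z*ω) = (starRingEnd ℂ) z * (-1-ω) := by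
  rw [_root_.map_mul, conj_omega]

lemma P_N_int_omega : ∀ m : ℤ, P (N ((m:ℂ)*ω) 0 ((m:ℝ) * Real.sqrt 3)) := by
  intro m
  induction m using Int.induction_on with
  | zero =>
      exact P_N_zero_params.congr (N_congr (by norm_num) rfl (by norm_num)).symm
  | succ k ih =>
      have h := ih.mul P_N_omega
      rw [Nmul] at h
      have hval : (starRingEnd ℂ) (((k:ℤ):ℂ)*ω)*ω + (starRingEnd ℂ) (0:ℂ) * 0 = ((k:ℤ):ℂ) := by
        rw [conj_omega_mul, map_intCast, map_zero, zero_mul, add_zero]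
        push_cast
        linear_combination (-(k:ℂ)) * homega
      exact h.congr (N_congr (by push_cast; ring) (by ring)
        (by rw [hval]; simp; push_cast; ring))
  | pred k ih =>
      have h := ih.mul P_N_omega_inv
      rw [Nmul] at h
      have hval : (starRingEnd ℂ) (((-k:ℤ):ℂ)*ω)*(-ω) + (starRingEnd ℂ) (0:ℂ) * 0
          = ((k:ℤ):ℂ) := by
        rw [conj_omega_mul, map_intCast, map_zero, zero_mul, add_zero]
        push_cast
        linear_combination (-(k:ℂ)) * homega
      exact h.congr (N_congr (by push_cast; ring) (by ring)
        (by rw [hval]; simp; push_cast; ring))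

lemma P_N_mn (m n : ℤ) :
    P (N ((m:ℂ) + (n:ℂ)*ω) 0 (((m+n-m*n : ℤ) : ℝ) * Real.sqrt 3)) := by
  have h := (P_N_int m).mul (P_N_int_omega n)
  rw [Nmul] at h
  have hval : ((starRingEnd ℂ) ((m:ℤ):ℂ) * (((n:ℤ):ℂ)*ω)
      + (starRingEnd ℂ) (0:ℂ) * 0).im = (m:ℝ)*(n:ℝ)*(Real.sqrt 3/2) := by
    rw [map_intCast, map_zero, zero_mul, add_zero,
      show ((m:ℂ) * ((n:ℂ)*ω)) = (((m*n:ℤ)):ℂ) * ω by push_cast; ring]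
    simp [Complex.mul_im, im_omega]
  exact h.congr (N_congr rfl (by ring) (by rw [hval]; push_cast; ring))

lemma P_N_second (p q : ℤ) :
    P (N 0 ((p:ℂ) + (q:ℂ)*ω) (((p+q-p*q : ℤ) : ℝ) * Real.sqrt 3)) := by
  have h := (P_MU1.mul (P_N_mn p q)).mul P_MU1
  rw [conj_N_swap] at h
  exact h

lemma P_N_pair (m n p q : ℤ) :
    P (N ((m:ℂ) + (n:ℂ)*ω) ((p:ℂ) + (q:ℂ)*ω)
        (((m+n-m*n+p+q-p*q : ℤ) : ℝ) * Real.sqrt 3)) := by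
  have h := (P_N_mn m n).mul (P_N_second p q)
  rw [Nmul] at h
  exact h.congr (N_congr (by ring) (by ring) (by simp; push_cast; ring))

lemma P_N_vert : P (N 0 0 (2 * Real.sqrt 3)) := by
  have hw : P (N (1+ω) 0 (Real.sqrt 3)) := by
    exact (P_N_mn 1 1).congr (N_congr (by push_cast; ring) rfl (by push_cast; ring))
  have hwinv : P (N (-(1+ω)) 0 (-(Real.sqrt 3))) := by
    have h := hw.inv_of (N_mul_N_neg (1+ω) 0 (Real.sqrt 3))
    simpa using h
  have hx : P (N (ω+1) 0 (3 * Real.sqrt 3)) := by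
    have h := (P_N_int_omega 1).mul (P_N_int 1)
    rw [Nmul] at h
    have hval : (starRingEnd ℂ) (((1:ℤ):ℂ)*ω) * ((1:ℤ):ℂ)
        + (starRingEnd ℂ) (0:ℂ) * 0 = -1-ω := by
      rw [conj_omega_mul, map_intCast, map_zero, zero_mul, add_zero]
      push_cast
      ring
    exact h.congr (N_congr (by push_cast; ring) (by ring)
      (by rw [hval]; simp [Complex.sub_im, Complex.neg_im, im_omega]; push_cast; ring))
  have h := hwinv.mul hx
  rw [Nmul] at h
  have hval : (starRingEnd ℂ) (-(1+ω)) * (ω+1) + (starRingEnd ℂ) (0:ℂ) * 0 = -1 := by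
    rw [map_neg, _root_.map_add, _root_.map_one, conj_omega, map_zero, zero_mul, add_zero]
    linear_combination homega
  exact h.congr (N_congr (by ring) (by ring) (by rw [hval]; simp; ring))

lemma P_N_vert_inv : P (N 0 0 (-(2 * Real.sqrt 3))) := by
  have h := P_N_vert.inv_of (N_mul_N_neg 0 0 (2 * Real.sqrt 3))
  simpa using h

lemma P_N_vert_pow : ∀ j : ℤ, P (N 0 0 ((j:ℝ) * (2 * Real.sqrt 3))) := by
  intro j
  induction j using Int.induction_on with
  | zero => exact P_N_zero_params.congr (N_congr rfl rfl (by norm_num)).symm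
  | succ k ih =>
      have h := ih.mul P_N_vert
      rw [Nmul] at h
      exact h.congr (N_congr (by ring) (by ring) (by simp; push_cast; ring))
  | pred k ih =>
      have h := ih.mul P_N_vert_inv
      rw [Nmul] at h
      exact h.congr (N_congr (by ring) (by ring) (by simp; push_cast; ring))

lemma P_N_full (m n p q b : ℤ) (hpar : 2 ∣ (b - (m+n-m*n+p+q-p*q))) :
    P (N ((m:ℂ) + (n:ℂ)*ω) ((p:ℂ) + (q:ℂ)*ω) ((b:ℝ) * Real.sqrt 3)) := by
  obtain ⟨j, hj⟩ := hpar
  have hb : b = (m+n-m*n+p+q-p*q) + 2*j := by linarith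
  have h := (P_N_pair m n p q).mul (P_N_vert_pow j)
  rw [Nmul] at h
  refine h.congr (N_congr (by ring) (by ring) ?_)
  have hbr : (b:ℝ) = ((m+n-m*n+p+q-p*q : ℤ) : ℝ) + 2*(j:ℝ) := by exact_mod_cast hb
  simp only [mul_zero, zero_mul, add_zero, _root_.map_zero, Complex.zero_im]
  rw [hbr]
  push_cast
  ring

/-! ### Classification of Eisenstein units and unitary 2x2 matrices -/

lemma eis_nonneg (m n : ℤ) : 0 ≤ m*m - m*n + n*n := by nlinarith [sq_nonneg (m-n)]

lemma unit_pairs (m n : ℤ) (h : m*m - m*n + n*n = 1) :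
    (m=1∧n=0)∨(m=-1∧n=0)∨(m=0∧n=1)∨(m=0∧n=-1)∨(m=1∧n=1)∨(m=-1∧n=-1) := by
  have hm2 : 3*(m*m) ≤ 4 := by nlinarith [sq_nonneg (2*n-m)]
  have hn2 : 3*(n*n) ≤ 4 := by nlinarith [sq_nonneg (2*m-n)]
  have h1 : m ≤ 1 := by nlinarith [sq_nonneg (m-1)]
  have h2 : -1 ≤ m := by nlinarith [sq_nonneg (m+1)]
  have h3 : n ≤ 1 := by nlinarith [sq_nonneg (n-1)]
  have h4 : -1 ≤ n := by nlinarith [sq_nonneg (n+1)]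
  interval_cases m <;> interval_cases n <;> omega

lemma P_M_unit (m n : ℤ) (h : m*m - m*n + n*n = 1) :
    P (M (Dg ((m:ℂ)+(n:ℂ)*ω) 1)) := by
  rcases unit_pairs m n h with ⟨hm,hn⟩|⟨hm,hn⟩|⟨hm,hn⟩|⟨hm,hn⟩|⟨hm,hn⟩|⟨hm,hn⟩ <;>
    subst hm <;> subst hn
  · have h := P_Mdg_pow 0
    rwa [show ((-ω)^0 : ℂ) = (((1:ℤ):ℂ)+((0:ℤ):ℂ)*ω) by push_cast; ring] at h
  · have h := P_Mdg_pow 3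
    rwa [show ((-ω)^3 : ℂ) = ((((-1):ℤ):ℂ)+((0:ℤ):ℂ)*ω) by
      push_cast; linear_combination (1-ω) * homega] at h
  · have h := P_Mdg_pow 4
    rwa [show ((-ω)^4 : ℂ) = (((0:ℤ):ℂ)+((1:ℤ):ℂ)*ω) by
      push_cast; linear_combination (ω*ω-ω) * homega] at h
  · have h := P_Mdg_pow 1
    rwa [show ((-ω)^1 : ℂ) = (((0:ℤ):ℂ)+(((-1):ℤ):ℂ)*ω) by push_cast; ring] at h
  · have h := P_Mdg_pow 5
    rwa [show ((-ω)^5 : ℂ) = (((1:ℤ):ℂ)+((1:ℤ):ℂ)*ω) by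
      push_cast; linear_combination (-(ω*ω*ω)+ω*ω-1) * homega] at h
  · have h := P_Mdg_pow 2
    rwa [show ((-ω)^2 : ℂ) = ((((-1):ℤ):ℂ)+(((-1):ℤ):ℂ)*ω) by
      push_cast; linear_combination homega] at h

lemma conj_mul_self (z : ℂ) : (starRingEnd ℂ) z * z = (Complex.normSq z : ℂ) := by
  rw [mul_comm, Complex.mul_conj]

/-- Norm-1 splitting for a pair of Eisenstein integers. -/
lemma Zω_cases (x y : ℂ) (hx : x ∈ Zω) (hy : y ∈ Zω)
    (h : (starRingEnd ℂ) x * x + (starRingEnd ℂ) y * y = 1) :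
    (x = 0 ∧ Complex.normSq y = 1) ∨ (Complex.normSq x = 1 ∧ y = 0) := by
  obtain ⟨m, n, hxe⟩ := hx
  obtain ⟨p, q, hye⟩ := hy
  rw [conj_mul_self, conj_mul_self] at h
  have hr : Complex.normSq x + Complex.normSq y = 1 := by exact_mod_cast h
  rw [hxe, hye, normSq_eis, normSq_eis] at hr
  have hz : (m*m - m*n + n*n) + (p*p - p*q + q*q) = 1 := by exact_mod_cast hr
  have h1 := eis_nonneg m n
  have h2 := eis_nonneg p q
  have : (m*m - m*n + n*n = 0 ∧ p*p - p*q + q*q = 1)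
      ∨ (m*m - m*n + n*n = 1 ∧ p*p - p*q + q*q = 0) := by omega
  rcases this with ⟨ha, hb⟩ | ⟨ha, hb⟩
  · left
    constructor
    · have : Complex.normSq x = 0 := by
        rw [hxe, normSq_eis, ha]; norm_num
      exact Complex.normSq_eq_zero.mp this
    · rw [hye, normSq_eis, hb]; norm_num
  · right
    constructor
    · rw [hxe, normSq_eis, ha]; norm_num
    · have : Complex.normSq y = 0 := by
        rw [hye, normSq_eis, hb]; norm_num
      exact Complex.normSq_eq_zero.mp this

lemma P_M_DgL (u : ℂ) (hu : u ∈ Zω) (h1 : Complex.normSq u = 1) : P (M (Dg u 1)) := by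
  obtain ⟨m, n, rfl⟩ := hu
  have : (m*m - m*n + n*n : ℤ) = 1 := by
    have := h1
    rw [normSq_eis] at this
    exact_mod_cast this
  exact P_M_unit m n this

lemma P_M_DgR (v : ℂ) (hv : v ∈ Zω) (h1 : Complex.normSq v = 1) : P (M (Dg 1 v)) := by
  have h := (P_MU1.mul (P_M_DgL v hv h1)).mul P_MU1
  rw [Mmul, Mmul, U1_Dg_U1] at h
  exact h

lemma P_M_Dg2 (u v : ℂ) (hu : u ∈ Zω) (hv : v ∈ Zω)
    (h1 : Complex.normSq u = 1) (h2 : Complex.normSq v = 1) : P (M (Dg u v)) := by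
  have h := (P_M_DgL u hu h1).mul (P_M_DgR v hv h2)
  rw [Mmul, Dg_mul, mul_one, one_mul] at h
  exact h

lemma normSq_one_ne_zero {z : ℂ} (h : Complex.normSq z = 1) : z ≠ 0 := by
  intro h0
  rw [h0] at h
  simp at h

/-- Membership for rotations with Eisenstein entries. -/
lemma P_M_of (A : Matrix (Fin 2) (Fin 2) ℂ)
    (e00 : A 0 0 ∈ Zω) (e01 : A 0 1 ∈ Zω) (e10 : A 1 0 ∈ Zω) (e11 : A 1 1 ∈ Zω)
    (hc0 : (starRingEnd ℂ) (A 0 0) * A 0 0 + (starRingEnd ℂ) (A 1 0) * A 1 0 = 1)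
    (hc1 : (starRingEnd ℂ) (A 0 1) * A 0 1 + (starRingEnd ℂ) (A 1 1) * A 1 1 = 1)
    (hor : (starRingEnd ℂ) (A 0 0) * A 0 1 + (starRingEnd ℂ) (A 1 0) * A 1 1 = 0) :
    P (M A) := by
  rcases Zω_cases (A 0 0) (A 1 0) e00 e10 hc0 with ⟨hz, hu⟩ | ⟨hu, hz⟩
  · -- A 0 0 = 0, A 1 0 is a unit : antidiagonal case
    have h11 : A 1 1 = 0 := by
      rw [hz] at hor
      simp only [map_zero, zero_mul, zero_add] at hor
      rcases mul_eq_zero.mp hor with h | h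
      · exact absurd (by simpa using h) (normSq_one_ne_zero hu)
      · exact h
    have h01 : Complex.normSq (A 0 1) = 1 := by
      rcases Zω_cases (A 0 1) (A 1 1) e01 e11 hc1 with ⟨hz', _⟩ | ⟨hu', _⟩
      · exfalso
        rw [hz'] at hc1
        rw [h11] at hc1
        simp at hc1
      · exact hu'
    have hA : A = U₁ * Dg (A 1 0) (A 0 1) := by
      rw [U1_Dg]
      conv_lhs => rw [Matrix.eta_fin_two A]
      rw [hz, h11]
    rw [hA, ← Mmul]
    exact P_MU1.mul ((by
      have h := (P_M_DgL (A 1 0) e10 hu).mul (P_M_DgR (A 0 1) e01 h01)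
      rw [Mmul, Dg_mul, mul_one, one_mul] at h
      exact h))
  · -- A 0 0 is a unit, A 1 0 = 0 : diagonal case
    have h01 : A 0 1 = 0 := by
      rw [hz] at hor
      simp only [map_zero, zero_mul, add_zero] at hor
      rcases mul_eq_zero.mp hor with h | h
      · exact absurd (by simpa using h) (normSq_one_ne_zero hu)
      · exact h
    have h11 : Complex.normSq (A 1 1) = 1 := by
      rcases Zω_cases (A 0 1) (A 1 1) e01 e11 hc1 with ⟨_, hu'⟩ | ⟨hu', _⟩
      · exact hu'
      · exfalso
        rw [h01] at hu'
        simp at hu'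
    have hA : A = Dg (A 0 0) (A 1 1) := by
      conv_lhs => rw [Matrix.eta_fin_two A]
      rw [hz, h01]
      rfl
    rw [hA]
    exact P_M_Dg2 _ _ e00 e11 hu h11

end Aux


lemma triple (G : Matrix (Fin 4) (Fin 4) ℂ) (i j : Fin 4) :
    (Gᴴ * Jm * G) i j
      = (starRingEnd ℂ) (G 3 i) * G 0 j + (starRingEnd ℂ) (G 1 i) * G 1 j
        + (starRingEnd ℂ) (G 2 i) * G 2 j + (starRingEnd ℂ) (G 0 i) * G 3 j := by
  simp [Matrix.mul_apply, Matrix.conjTranspose_apply, Jm, Fin.sum_univ_four,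
    Matrix.vecHead, Matrix.vecTail, -mul_eq_zero, -neg_eq_zero]

lemma even_sq_sub (x : ℤ) : 2 ∣ x*x - x := by
  have h := Int.even_mul_succ_self (x-1)
  rw [show (x-1)*((x-1)+1) = x*x - x by ring] at h
  obtain ⟨c, hc⟩ := h
  exact ⟨c, by linarith⟩

lemma parity_lemma (a b m n p q A B C D E F : ℤ)
    (h1 : 2 ∣ A - m) (h2 : 2 ∣ C - n) (h3 : 2 ∣ D - p) (h4 : 2 ∣ F - q)
    (h : 2*a - b + (A - B + C) + (D - E + F) = 0) :
    2 ∣ (b - (m+n-B+p+q-E)) := by omega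

/-- Generation of the stabilizer of ∞ in the Eisenstein–Picard modular group: any G ∈ U(3,1)
with Eisenstein integer entries, G₄₁ = 0 and G₁₁ = 1 lies in the subgroup of GL(4,ℂ)
generated by N₁, M_{U₁}, M_{U₂}. -/
theorem stmt7 (G : Matrix (Fin 4) (Fin 4) ℂ) (hG : Gᴴ * Jm * G = Jm)
    (hent : ∀ i j, G i j ∈ Zω) (h41 : G 3 0 = 0) (h11 : G 0 0 = 1) :
    ∃ g ∈ Subgroup.closure gens3, (g : Matrix (Fin 4) (Fin 4) ℂ) = G := by
  have E : ∀ i j, (starRingEnd ℂ) (G 3 i) * G 0 j + (starRingEnd ℂ) (G 1 i) * G 1 j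
      + (starRingEnd ℂ) (G 2 i) * G 2 j + (starRingEnd ℂ) (G 0 i) * G 3 j = Jm i j := by
    intro i j
    rw [← triple, hG]
  -- first column
  have e00 := E 0 0
  rw [h41, h11, show Jm 0 0 = 0 by norm_num [Jm, Matrix.vecHead, Matrix.vecTail]] at e00
  simp only [map_zero, zero_mul, mul_zero, mul_one, add_zero, zero_add] at e00
  rw [conj_mul_self, conj_mul_self] at e00
  have e00r : Complex.normSq (G 1 0) + Complex.normSq (G 2 0) = 0 := by exact_mod_cast e00
  have hg10 : G 1 0 = 0 := by
    apply Complex.normSq_eq_zero.mp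
    have := Complex.normSq_nonneg (G 1 0)
    have := Complex.normSq_nonneg (G 2 0)
    linarith
  have hg20 : G 2 0 = 0 := by
    apply Complex.normSq_eq_zero.mp
    have := Complex.normSq_nonneg (G 1 0)
    have := Complex.normSq_nonneg (G 2 0)
    linarith
  -- last row
  have hg31 : G 3 1 = 0 := by
    have e := E 1 0
    rw [h41, h11, hg10, hg20, show Jm 1 0 = 0 by norm_num [Jm, Matrix.vecHead, Matrix.vecTail]] at e
    simp only [map_zero, zero_mul, mul_zero, mul_one, add_zero, zero_add] at e
    simpa using congrArg (starRingEnd ℂ) e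
  have hg32 : G 3 2 = 0 := by
    have e := E 2 0
    rw [h41, h11, hg10, hg20, show Jm 2 0 = 0 by rfl] at e
    simp only [map_zero, zero_mul, mul_zero, mul_one, add_zero, zero_add] at e
    simpa using congrArg (starRingEnd ℂ) e
  have hg33 : G 3 3 = 1 := by
    have e := E 3 0
    rw [h41, h11, hg10, hg20, show Jm 3 0 = 1 by rfl] at e
    simp only [map_zero, zero_mul, mul_zero, mul_one, add_zero, zero_add] at e
    simpa using congrArg (starRingEnd ℂ) e
  -- unitarity of the 2x2 block
  have hc0 : (starRingEnd ℂ) (G 1 1) * G 1 1 + (starRingEnd ℂ) (G 2 1) * G 2 1 = 1 := by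
    have e := E 1 1
    rw [hg31, show Jm 1 1 = 1 by norm_num [Jm, Matrix.vecHead, Matrix.vecTail]] at e
    simpa using e
  have hc1 : (starRingEnd ℂ) (G 1 2) * G 1 2 + (starRingEnd ℂ) (G 2 2) * G 2 2 = 1 := by
    have e := E 2 2
    rw [hg32, show Jm 2 2 = 1 by rfl] at e
    simpa using e
  have hor : (starRingEnd ℂ) (G 1 1) * G 1 2 + (starRingEnd ℂ) (G 2 1) * G 2 2 = 0 := by
    have e := E 1 2
    rw [hg31, hg32, show Jm 1 2 = 0 by rfl] at e
    simpa using e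
  -- first row relations
  have h01 : G 0 1 = -(G 1 1 * (starRingEnd ℂ) (G 1 3) + G 2 1 * (starRingEnd ℂ) (G 2 3)) := by
    have e := E 1 3
    rw [hg31, hg33, show Jm 1 3 = 0 by rfl] at e
    simp only [map_zero, zero_mul, mul_one, add_zero, zero_add] at e
    have e' := congrArg (starRingEnd ℂ) e
    simp only [map_add, _root_.map_mul, Complex.conj_conj, map_zero] at e'
    linear_combination e'
  have h02 : G 0 2 = -(G 1 2 * (starRingEnd ℂ) (G 1 3) + G 2 2 * (starRingEnd ℂ) (G 2 3)) := by
    have e := E 2 3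
    rw [hg32, hg33, show Jm 2 3 = 0 by rfl] at e
    simp only [map_zero, zero_mul, mul_one, add_zero, zero_add] at e
    have e' := congrArg (starRingEnd ℂ) e
    simp only [map_add, _root_.map_mul, Complex.conj_conj, map_zero] at e'
    linear_combination e'
  -- the (3,3) equation
  have e33 := E 3 3
  rw [hg33, show Jm 3 3 = 0 by rfl] at e33
  rw [conj_mul_self, conj_mul_self] at e33
  simp only [_root_.map_one, one_mul, mul_one] at e33
  have hre := congrArg Complex.re e33
  simp only [Complex.add_re, Complex.conj_re, Complex.ofReal_re, Complex.zero_re] at hre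
  -- integer data
  obtain ⟨m, n, h13⟩ := hent 1 3
  obtain ⟨p, q, h23⟩ := hent 2 3
  obtain ⟨a, b, h03⟩ := hent 0 3
  have hns13 : Complex.normSq (G 1 3) = ((m*m - m*n + n*n : ℤ) : ℝ) := by
    rw [h13]; exact normSq_eis m n
  have hns23 : Complex.normSq (G 2 3) = ((p*p - p*q + q*q : ℤ) : ℝ) := by
    rw [h23]; exact normSq_eis p q
  have hg03re : (G 0 3).re = (a:ℝ) - (b:ℝ)/2 := by
    rw [h03]
    simp [Complex.add_re, Complex.mul_re, re_omega, im_omega]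
    ring
  have hg03im : (G 0 3).im = (b:ℝ) * Real.sqrt 3 / 2 := by
    rw [h03]
    simp [Complex.add_im, Complex.mul_im, im_omega, re_omega]
    ring
  rw [hns13, hns23, hg03re] at hre
  have hkeyZ : 2*a - b + (m*m - m*n + n*n) + (p*p - p*q + q*q) = 0 := by
    have : 2*(a:ℝ) - (b:ℝ) + ((m*m - m*n + n*n : ℤ):ℝ) + ((p*p - p*q + q*q : ℤ):ℝ) = 0 := by
      linarith
    exact_mod_cast this
  have hpar : 2 ∣ (b - (m+n-m*n+p+q-p*q)) :=
    parity_lemma a b m n p q (m*m) (m*n) (n*n) (p*p) (p*q) (q*q)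
      (even_sq_sub m) (even_sq_sub n) (even_sq_sub p) (even_sq_sub q) hkeyZ
  -- the (0,3) entry in closed form
  have h03' : G 0 3 = (-((Complex.normSq (G 1 3) : ℂ) + (Complex.normSq (G 2 3) : ℂ))
      + Complex.I * (((b:ℝ) * Real.sqrt 3 : ℝ) : ℂ)) / 2 := by
    rw [eq_div_iff (by norm_num : (2:ℂ) ≠ 0)]
    apply Complex.ext
    · simp only [Complex.mul_re, Complex.add_re, Complex.neg_re, Complex.ofReal_re,
        Complex.I_re, Complex.mul_im, Complex.I_im, Complex.ofReal_im, Complex.add_im,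
        Complex.neg_im]
      rw [hns13, hns23, hg03re]
      norm_num
      push_cast at hre ⊢
      linarith
    · simp only [Complex.mul_re, Complex.add_re, Complex.neg_re, Complex.ofReal_re,
        Complex.I_re, Complex.mul_im, Complex.I_im, Complex.ofReal_im, Complex.add_im,
        Complex.neg_im]
      rw [hg03im]
      norm_num
      try ring
  push_cast at h03'
  -- the decomposition
  have Gdecomp : G = N (G 1 3) (G 2 3) ((b:ℝ) * Real.sqrt 3)
      * M !![G 1 1, G 1 2; G 2 1, G 2 2] := by
    ext i j
    fin_cases i <;> fin_cases j <;>
      simp [N, M, Matrix.mul_apply, Fin.sum_univ_four, Matrix.vecHead, Matrix.vecTail,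
        -mul_eq_zero, -neg_eq_zero] <;>
      first
        | rfl
        | exact h11
        | exact hg10
        | exact hg20
        | exact h41
        | exact hg31
        | exact hg32
        | exact hg33
        | linear_combination h01
        | linear_combination h02
        | (push_cast; linear_combination h03')
  have hN : P (N (G 1 3) (G 2 3) ((b:ℝ) * Real.sqrt 3)) :=
    (P_N_full m n p q b hpar).congr (N_congr h13.symm h23.symm rfl)
  have hA : P (M !![G 1 1, G 1 2; G 2 1, G 2 2]) := by
    apply P_M_of
    · exact hent 1 1
    · exact hent 1 2
    · exact hent 2 1
    · exact hent 2 2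
    · exact hc0
    · exact hc1
    · exact hor
  exact (hN.mul hA).congr Gdecomp.symm
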